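/- arXiv:2301.07530 — 3 statements merged into one kernel-verified Lean document; each statement's English description precedes it below -/
import Mathlib

section
/- Let E be a real inner product space and K ⊆ E a convex set. Let T ≥ 1, λ, G > 0, and ℓ₁, …, ℓ_T : E → ℝ differentiable functions that are λ-strongly convex on K in the paper's convention (ℓ_t(μ) − ℓ_t(μ₀) ≤ ⟨∇ℓ_t(μ), μ − μ₀⟩ − λ‖μ − μ₀‖² for μ, μ₀ ∈ K) with ‖∇ℓ_t(x)‖ ≤ G for x ∈ K. Let η₁, …, η_T > 0 satisfy 1/η₁ ≤ λ and 1/η_t − λ ≤ 1/η_{t−1} for 2 ≤ t ≤ T. Let μ̂₁ ∈ K and define, for 1 ≤ t ≤ T, μ̂_{t+1} as a metric projection onto K of μ̂_t − η_t∇ℓ_t(μ̂_t). Let μ₁, …, μ_{T+1} ∈ K be arbitrary comparators and define Perf(t) := ⟨μ̂_{t+1} − (μ_t + μ_{t+1})/2, μ_{t+1} − μ_t⟩. Then Σ_{t=1}^{T} ℓ_t(μ̂_t) − Σ_{t=1}^{T} ℓ_t(μ_t) ≤ (G²/2)·Σ_{t=1}^{T} η_t − Σ_{t=1}^{T} Perf(t)/η_t.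 -/
open RealInnerProductSpace Finset

lemma proj_obtuse {E : Type*} [NormedAddCommGroup E] [InnerProductSpace ℝ E]
    {K : Set E} (hK : Convex ℝ K) {z q : E} (hq : q ∈ K)
    (hmin : ∀ w ∈ K, ‖z - q‖ ≤ ‖z - w‖) {y : E} (hy : y ∈ K) :
    ⟪z - q, y - q⟫ ≤ 0 := by
  by_contra h
  push_neg at h
  set c := ⟪z - q, y - q⟫ with hc
  have hne : y - q ≠ 0 := by
    intro h0
    rw [hc, h0, inner_zero_right] at h
    exact lt_irrefl 0 h
  have hn : 0 < ‖y - q‖ ^ 2 := pow_pos (norm_pos_iff.mpr hne) 2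
  set s := min 1 (c / ‖y - q‖ ^ 2) with hs
  have hs0 : 0 < s := lt_min one_pos (div_pos h hn)
  have hs1 : s ≤ 1 := min_le_left _ _
  have hwK : (1 - s) • q + s • y ∈ K := hK hq hy (by linarith) hs0.le (by ring)
  have hweq : (1 - s) • q + s • y = q + s • (y - q) := by
    rw [sub_smul, smul_sub, one_smul]; abel
  have h1 := hmin _ (hweq ▸ hwK)
  have h2 : ‖z - (q + s • (y - q))‖ ^ 2 = ‖z - q‖ ^ 2 - 2 * s * c + s ^ 2 * ‖y - q‖ ^ 2 := by
    have : z - (q + s • (y - q)) = (z - q) - s • (y - q) := by abel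
    rw [this, norm_sub_sq_real, real_inner_smul_right, norm_smul, mul_pow]
    simp [abs_of_pos hs0, hc]
    ring
  have h3 : ‖z - q‖ ^ 2 ≤ ‖z - (q + s • (y - q))‖ ^ 2 := by
    apply pow_le_pow_left₀ (norm_nonneg _) h1
  have h4 : 2 * s * c ≤ s ^ 2 * ‖y - q‖ ^ 2 := by nlinarith
  have h5 : s * ‖y - q‖ ^ 2 ≤ c := by
    have := min_le_right 1 (c / ‖y - q‖ ^ 2)
    calc s * ‖y - q‖ ^ 2 ≤ (c / ‖y - q‖ ^ 2) * ‖y - q‖ ^ 2 := by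
          apply mul_le_mul_of_nonneg_right this hn.le
      _ = c := div_mul_cancel₀ _ hn.ne'
  nlinarith

lemma proj_dist {E : Type*} [NormedAddCommGroup E] [InnerProductSpace ℝ E]
    {z q y : E} (hobt : ⟪z - q, y - q⟫ ≤ 0) : ‖q - y‖ ^ 2 ≤ ‖z - y‖ ^ 2 := by
  have h1 : z - y = (z - q) + (q - y) := by abel
  have h2 : ⟪z - q, q - y⟫ = - ⟪z - q, y - q⟫ := by
    rw [← inner_neg_right]; congr 1; abel
  have h3 := norm_add_sq_real (z - q) (q - y)
  rw [← h1] at h3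
  nlinarith [norm_nonneg (z - q), sq_nonneg ‖z - q‖]

lemma mid_identity {E : Type*} [NormedAddCommGroup E] [InnerProductSpace ℝ E]
    (v u w : E) :
    ‖v - u‖ ^ 2 = ‖v - w‖ ^ 2 + 2 * ⟪v - (2 : ℝ)⁻¹ • (u + w), w - u⟫ := by
  simp only [norm_sub_sq_real, inner_sub_left, inner_sub_right, inner_add_left,
    inner_add_right, real_inner_smul_left, real_inner_self_eq_norm_sq,
    real_inner_comm u v, real_inner_comm w v, real_inner_comm u w]
  ring

/-- Appendix theorem: dynamic regret of classical projected OGD with `λ`-strongly convex losses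
(paper's convention), with step sizes satisfying `1/η₁ ≤ λ` and `1/η_t − λ ≤ 1/η_{t−1}`, in terms
of the performances `Perf(t) = ⟨μ̂_{t+1} − (μ_t + μ_{t+1})/2, μ_{t+1} − μ_t⟩`:
`Σℓ_t(μ̂_t) − Σℓ_t(μ_t) ≤ (G²/2)Ση_t − Σ Perf(t)/η_t`. -/
theorem ogd_regret_performance_strongly_convex {E : Type*} [NormedAddCommGroup E]
    [InnerProductSpace ℝ E] [CompleteSpace E]
    (K : Set E) (hK : Convex ℝ K)
    (T : ℕ) (hT : 1 ≤ T) (lam G : ℝ) (hlam : 0 < lam) (hG : 0 < G)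
    (ℓ : ℕ → E → ℝ) (g : ℕ → E → E)
    (hdiff : ∀ t, ∀ x : E, HasGradientAt (ℓ t) (g t x) x)
    (hsc : ∀ t ∈ Icc 1 T, ∀ μ' ∈ K, ∀ μ₀ ∈ K,
      ℓ t μ' - ℓ t μ₀ ≤ ⟪g t μ', μ' - μ₀⟫ - lam * ‖μ' - μ₀‖ ^ 2)
    (hGb : ∀ t ∈ Icc 1 T, ∀ x ∈ K, ‖g t x‖ ≤ G)
    (η : ℕ → ℝ) (hηpos : ∀ t ∈ Icc 1 T, 0 < η t)
    (hη1 : 1 / η 1 ≤ lam)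
    (hηrec : ∀ t, 2 ≤ t → t ≤ T → 1 / η t - lam ≤ 1 / η (t - 1))
    (p : ℕ → E) (hp1 : p 1 ∈ K)
    (hiter : ∀ t ∈ Icc 1 T, p (t + 1) ∈ K ∧
      ∀ y ∈ K, ‖p t - η t • g t (p t) - p (t + 1)‖ ≤ ‖p t - η t • g t (p t) - y‖)
    (μ : ℕ → E) (hμK : ∀ t ∈ Icc 1 (T + 1), μ t ∈ K) :
    ∑ t ∈ Icc 1 T, ℓ t (p t) - ∑ t ∈ Icc 1 T, ℓ t (μ t) ≤
      G ^ 2 / 2 * ∑ t ∈ Icc 1 T, η t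
        - ∑ t ∈ Icc 1 T, ⟪p (t + 1) - (2 : ℝ)⁻¹ • (μ t + μ (t + 1)), μ (t + 1) - μ t⟫ / η t := by
  set a : ℕ → ℝ := fun t => ‖p t - μ t‖ ^ 2 with ha
  set P : ℕ → ℝ := fun t => ⟪p (t + 1) - (2 : ℝ)⁻¹ • (μ t + μ (t + 1)), μ (t + 1) - μ t⟫ with hP
  have hanon : ∀ t, 0 ≤ a t := fun t => sq_nonneg _
  -- membership of iterates
  have hpK : ∀ t, 1 ≤ t → t ≤ T → p t ∈ K := by
    intro t h1 h2
    rcases Nat.lt_or_ge t 2 with h | h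
    · interval_cases t
      exact hp1
    · have : t - 1 ∈ Icc 1 T := by
        simp only [mem_Icc]; omega
      have := (hiter _ this).1
      rwa [Nat.sub_add_cancel (by omega)] at this
  -- per-step bound
  have step : ∀ t ∈ Icc 1 T,
      ℓ t (p t) - ℓ t (μ t) ≤
        (a t - a (t + 1)) / (2 * η t) - lam * a t + G ^ 2 / 2 * η t - P t / η t := by
    intro t ht
    rw [mem_Icc] at ht
    have hμt : μ t ∈ K := hμK t (by simp only [mem_Icc]; omega)
    have hμt1 : μ (t + 1) ∈ K := hμK (t + 1) (by simp only [mem_Icc]; omega)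
    have hpt : p t ∈ K := hpK t ht.1 ht.2
    have hit := hiter t (by simp only [mem_Icc]; omega)
    have hηt : 0 < η t := hηpos t (by simp only [mem_Icc]; omega)
    have hgb : ‖g t (p t)‖ ≤ G := hGb t (by simp only [mem_Icc]; omega) _ hpt
    -- projection inequality
    have hobt := proj_obtuse hK hit.1 hit.2 hμt
    have hproj : ‖p (t + 1) - μ t‖ ^ 2 ≤ ‖p t - η t • g t (p t) - μ t‖ ^ 2 :=
      proj_dist hobt
    -- expand the gradient step norm
    have hexp : ‖p t - η t • g t (p t) - μ t‖ ^ 2 =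
        a t - 2 * η t * ⟪g t (p t), p t - μ t⟫ + η t ^ 2 * ‖g t (p t)‖ ^ 2 := by
      have : p t - η t • g t (p t) - μ t = (p t - μ t) - η t • g t (p t) := by abel
      rw [this, norm_sub_sq_real, real_inner_smul_right, norm_smul, mul_pow,
        real_inner_comm]
      simp [abs_of_pos hηt, ha]
      ring
    -- midpoint identity
    have hmid : ‖p (t + 1) - μ t‖ ^ 2 = a (t + 1) + 2 * P t := by
      simpa [ha, hP] using mid_identity (p (t + 1)) (μ t) (μ (t + 1))
    -- combine: 2η⟪g, p-μ⟫ ≤ a t - a(t+1) - 2 P t + η² G²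
    have h2 : 2 * η t * ⟪g t (p t), p t - μ t⟫ ≤
        a t - a (t + 1) - 2 * P t + η t ^ 2 * G ^ 2 := by
      nlinarith [sq_nonneg (η t), norm_nonneg (g t (p t)),
        mul_le_mul_of_nonneg_left (pow_le_pow_left₀ (norm_nonneg _) hgb 2)
          (sq_nonneg (η t))]
    have hkey : ⟪g t (p t), p t - μ t⟫ ≤
        (a t - a (t + 1)) / (2 * η t) + G ^ 2 / 2 * η t - P t / η t := by
      have hEq : (a t - a (t + 1)) / (2 * η t) + G ^ 2 / 2 * η t - P t / η t
          - ⟪g t (p t), p t - μ t⟫ =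
          (a t - a (t + 1) - 2 * P t + η t ^ 2 * G ^ 2
            - 2 * η t * ⟪g t (p t), p t - μ t⟫) / (2 * η t) := by
        field_simp
        ring
      have hnum : 0 ≤ (a t - a (t + 1) - 2 * P t + η t ^ 2 * G ^ 2
          - 2 * η t * ⟪g t (p t), p t - μ t⟫) / (2 * η t) :=
        div_nonneg (by linarith) (by linarith)
      linarith [hEq ▸ hnum]
    have hstrong := hsc t (by simp only [mem_Icc]; omega) (p t) hpt (μ t) hμt
    simp only [ha] at hstrong ⊢
    linarith
  -- telescoping / step-size part
  have keysum : ∀ n, 1 ≤ n → n ≤ T →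
      ∑ t ∈ Icc 1 n, ((a t - a (t + 1)) / (2 * η t) - lam * a t) ≤
        - a (n + 1) / (2 * η n) := by
    intro n h1 h2
    induction n, h1 using Nat.le_induction with
    | base =>
      have hη1' : 0 < η 1 := hηpos 1 (by simp only [mem_Icc]; omega)
      simp only [Icc_self, sum_singleton]
      have hc : 1 / (2 * η 1) ≤ lam := by
        have : 1 / (2 * η 1) ≤ 1 / η 1 := by
          apply div_le_div_of_nonneg_left one_pos.le hη1' (by linarith)
        linarith
      have hEq : (a 1 - a (1 + 1)) / (2 * η 1) - lam * a 1 + a (1 + 1) / (2 * η 1) =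
          a 1 * (1 / (2 * η 1) - lam) := by field_simp; ring
      have hnp : a 1 * (1 / (2 * η 1) - lam) ≤ 0 :=
        mul_nonpos_of_nonneg_of_nonpos (hanon 1) (by linarith)
      rw [neg_div]
      linarith [hEq, hnp]
    | succ n hn ih =>
      have hnT : n ≤ T := by omega
      have ih' := ih hnT
      have hηn : 0 < η n := hηpos n (by simp only [mem_Icc]; omega)
      have hηn1 : 0 < η (n + 1) := hηpos (n + 1) (by simp only [mem_Icc]; omega)
      have hrec := hηrec (n + 1) (by omega) h2
      rw [Nat.add_sub_cancel] at hrec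
      rw [sum_Icc_succ_top (by omega)]
      have hc : 1 / (2 * η (n + 1)) - lam ≤ 1 / (2 * η n) := by
        have e1 : 1 / (2 * η (n + 1)) = (1 / η (n + 1)) / 2 := by
          rw [div_div]; ring_nf
        have e2 : 1 / (2 * η n) = (1 / η n) / 2 := by
          rw [div_div]; ring_nf
        rw [e1, e2]
        linarith
      have hfac : a (n + 1) * (1 / (2 * η (n + 1)) - lam - 1 / (2 * η n)) ≤ 0 :=
        mul_nonpos_of_nonneg_of_nonpos (hanon (n + 1)) (by linarith)
      have hEq : (a (n + 1) - a (n + 1 + 1)) / (2 * η (n + 1)) - lam * a (n + 1)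
          + a (n + 1 + 1) / (2 * η (n + 1)) - a (n + 1) / (2 * η n) =
          a (n + 1) * (1 / (2 * η (n + 1)) - lam - 1 / (2 * η n)) := by
        field_simp
        ring
      rw [neg_div]
      rw [neg_div] at ih'
      linarith [hEq, hfac, ih']
  have hfinal := keysum T hT le_rfl
  have hlast : - a (T + 1) / (2 * η T) ≤ 0 := by
    have hηT : 0 < η T := hηpos T (by simp only [mem_Icc]; omega)
    have := div_nonneg (hanon (T + 1)) (by linarith : (0:ℝ) ≤ 2 * η T)
    rw [neg_div]
    linarith [this]
  -- assemble
  have hsum : ∑ t ∈ Icc 1 T, (ℓ t (p t) - ℓ t (μ t)) ≤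
      ∑ t ∈ Icc 1 T, ((a t - a (t + 1)) / (2 * η t) - lam * a t
        + G ^ 2 / 2 * η t - P t / η t) := sum_le_sum step
  rw [sum_sub_distrib] at hsum
  have hsplit : ∑ t ∈ Icc 1 T, ((a t - a (t + 1)) / (2 * η t) - lam * a t
      + G ^ 2 / 2 * η t - P t / η t) =
      (∑ t ∈ Icc 1 T, ((a t - a (t + 1)) / (2 * η t) - lam * a t))
        + G ^ 2 / 2 * ∑ t ∈ Icc 1 T, η t - ∑ t ∈ Icc 1 T, P t / η t := by
    rw [mul_sum, ← sum_add_distrib, ← sum_sub_distrib]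
  rw [hsplit] at hsum
  show ∑ t ∈ Icc 1 T, ℓ t (p t) - ∑ t ∈ Icc 1 T, ℓ t (μ t) ≤
      G ^ 2 / 2 * ∑ t ∈ Icc 1 T, η t - ∑ t ∈ Icc 1 T, P t / η t
  linarith [hsum, hfinal, hlast]
end

section
/- Let d ≥ 1, ε > 0 and g₁, …, g_T ∈ ℝ^d. Define A₀ := ε·I_d and A_t := A_{t−1} + g_t g_tᵀ for 1 ≤ t ≤ T. Then Σ_{t=1}^{T} g_tᵀ A_t⁻¹ g_t ≤ log(det A_T) − log(det A₀). Moreover, if ‖g_t‖ ≤ G for all t, then Σ_{t=1}^{T} g_tᵀ A_t⁻¹ g_t ≤ d·log((T·G² + ε)/ε). -/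
open Matrix Finset

variable {d : ℕ}

lemma ons_vecMulVec_mulVec (v w x : Fin d → ℝ) :
    vecMulVec v w *ᵥ x = (w ⬝ᵥ x) • v := by
  ext i
  simp [vecMulVec_apply, mulVec, dotProduct, Finset.mul_sum, mul_assoc, mul_comm, mul_left_comm]

lemma ons_psd_vecMulVec (v : Fin d → ℝ) : (vecMulVec v v).PosSemidef := by
  refine Matrix.PosSemidef.of_dotProduct_mulVec_nonneg ?_ ?_
  · ext i j
    simp [conjTranspose_apply, vecMulVec_apply, mul_comm]
  · intro x
    rw [ons_vecMulVec_mulVec, star_trivial, dotProduct_smul]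
    have : x ⬝ᵥ v = v ⬝ᵥ x := dotProduct_comm _ _
    rw [smul_eq_mul, this, ← sq]
    positivity

lemma ons_row_mul_col (M : Matrix (Fin d) (Fin d) ℝ) (u v : Fin d → ℝ) :
    (replicateRow Unit v * M * replicateCol Unit u).det = v ⬝ᵥ M *ᵥ u := by
  rw [det_unique]
  simp only [mul_apply, replicateRow_apply, replicateCol_apply, dotProduct, mulVec, Finset.sum_mul,
    Finset.mul_sum]
  rw [Finset.sum_comm]
  apply Finset.sum_congr rfl
  intro i _
  apply Finset.sum_congr rfl
  intro j _
  ring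

lemma ons_entry (M : Matrix (Fin d) (Fin d) ℝ) (u v : Fin d → ℝ) (a b : Unit) :
    (replicateRow Unit v * M * replicateCol Unit u) a b = v ⬝ᵥ M *ᵥ u := by
  simp only [mul_apply, replicateRow_apply, replicateCol_apply, dotProduct, mulVec, Finset.sum_mul,
    Finset.mul_sum]
  rw [Finset.sum_comm]
  exact Finset.sum_congr rfl fun i _ => Finset.sum_congr rfl fun j _ => by ring

lemma ons_key {B : Matrix (Fin d) (Fin d) ℝ} (hB : B.PosDef) (v : Fin d → ℝ) :
    (B + vecMulVec v v).PosDef ∧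
      v ⬝ᵥ (B + vecMulVec v v)⁻¹ *ᵥ v ≤
        Real.log (B + vecMulVec v v).det - Real.log B.det := by
  set A := B + vecMulVec v v with hA
  have hApd : A.PosDef := hB.add_posSemidef (ons_psd_vecMulVec v)
  refine ⟨hApd, ?_⟩
  set s : ℝ := v ⬝ᵥ B⁻¹ *ᵥ v with hs
  have hs0 : 0 ≤ s := by
    have := hB.inv.posSemidef.dotProduct_mulVec_nonneg v
    rwa [star_trivial] at this
  -- determinant lemma
  have h11 : (1 + replicateRow Unit v * B⁻¹ * replicateCol Unit v).det = 1 + s := by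
    rw [det_unique, Matrix.add_apply, Matrix.one_apply_eq, ons_entry]
  have hdet : A.det = B.det * (1 + s) := by
    rw [hA, vecMulVec_eq Unit, det_add_replicateCol_mul_replicateRow (by simpa using hB.det_pos.ne'.isUnit) v v,
      h11]
  have hBinv : B⁻¹ * B = 1 := nonsing_inv_mul _ (by simpa using hB.det_pos.ne'.isUnit)
  have h1 : ∀ y : Fin d → ℝ, B⁻¹ *ᵥ (B *ᵥ y) = y := by
    intro y; rw [mulVec_mulVec, hBinv, one_mulVec]
  obtain ⟨a, ha⟩ : ∃ a, a = v ⬝ᵥ A⁻¹ *ᵥ v := ⟨_, rfl⟩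
  have hAx : A *ᵥ (A⁻¹ *ᵥ v) = v := by
    rw [mulVec_mulVec, mul_nonsing_inv _ (by simpa using hApd.det_pos.ne'.isUnit),
      one_mulVec]
  have hBx : B *ᵥ (A⁻¹ *ᵥ v) = (1 - a) • v := by
    have h2 : B *ᵥ (A⁻¹ *ᵥ v) + (v ⬝ᵥ (A⁻¹ *ᵥ v)) • v = v := by
      rw [← ons_vecMulVec_mulVec v v, ← add_mulVec, ← hA, hAx]
    rw [sub_smul, one_smul, ha]
    linear_combination (norm := module) h2
  have hxv : A⁻¹ *ᵥ v = (1 - a) • (B⁻¹ *ᵥ v) := by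
    rw [← h1 (A⁻¹ *ᵥ v), hBx, mulVec_smul]
  have hvx : a = (1 - a) * s :=
    calc a = v ⬝ᵥ A⁻¹ *ᵥ v := ha
    _ = v ⬝ᵥ ((1 - a) • (B⁻¹ *ᵥ v)) := by rw [hxv]
    _ = (1 - a) * s := by rw [dotProduct_smul, smul_eq_mul]
  have h1s : (0:ℝ) < 1 + s := by linarith
  have hval : a = 1 - B.det / A.det := by
    have hd : B.det / A.det = 1 / (1 + s) := by
      rw [hdet, div_mul_cancel_left₀ hB.det_pos.ne', one_div]
    have haa : a = s / (1 + s) := by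
      field_simp
      linear_combination hvx
    rw [haa, hd]
    field_simp
    ring
  have hr : 0 < B.det / A.det := div_pos hB.det_pos hApd.det_pos
  have hlog : Real.log (B.det / A.det) ≤ B.det / A.det - 1 :=
    Real.log_le_sub_one_of_pos hr
  rw [Real.log_div hB.det_pos.ne' hApd.det_pos.ne'] at hlog
  rw [← ha, hval]
  linarith

lemma ons_det_le {A : Matrix (Fin d) (Fin d) ℝ} (hA : A.PosSemidef) {c : ℝ}
    (hc : (c • (1 : Matrix (Fin d) (Fin d) ℝ) - A).PosSemidef) : A.det ≤ c ^ d := by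
  have hH := hA.isHermitian
  rw [hH.det_eq_prod_eigenvalues]
  have hle : ∀ i, hH.eigenvalues i ≤ c := by
    intro i
    set x : Fin d → ℝ := ⇑(hH.eigenvectorBasis i) with hx
    have hne : hH.eigenvectorBasis i ≠ 0 := hH.eigenvectorBasis.orthonormal.ne_zero i
    have hx0 : x ≠ 0 := fun h => hne (by ext j; simpa [hx] using congrFun h j)
    have hAv : A *ᵥ x = hH.eigenvalues i • x := hH.mulVec_eigenvectorBasis i
    have hq := hc.dotProduct_mulVec_nonneg x
    rw [star_trivial, sub_mulVec, smul_mulVec, one_mulVec, hAv,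
      dotProduct_sub, dotProduct_smul, dotProduct_smul] at hq
    have hxx : 0 < x ⬝ᵥ x := by
      have := dotProduct_star_self_pos_iff (v := x)
      rw [star_trivial] at this
      exact this.mpr hx0
    have h2 : 0 ≤ (c - hH.eigenvalues i) * (x ⬝ᵥ x) := by
      simpa [smul_eq_mul, sub_mul] using hq
    nlinarith
  calc (∏ i, (hH.eigenvalues i : ℝ)) ≤ ∏ _i : Fin d, c := by
        apply Finset.prod_le_prod
        · exact fun i _ => hA.eigenvalues_nonneg i
        · exact fun i _ => hle i
  _ = c ^ d := by simp

lemma ons_dot_self_norm (v : EuclideanSpace ℝ (Fin d)) :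
    (v : Fin d → ℝ) ⬝ᵥ (v : Fin d → ℝ) = ‖v‖ ^ 2 := by
  rw [EuclideanSpace.norm_eq]
  rw [Real.sq_sqrt (by positivity)]
  simp [dotProduct, sq]

lemma ons_psd_sub {G : ℝ} (v : EuclideanSpace ℝ (Fin d)) (hv : ‖v‖ ≤ G) :
    (G ^ 2 • (1 : Matrix (Fin d) (Fin d) ℝ)
      - vecMulVec (v : Fin d → ℝ) (v : Fin d → ℝ)).PosSemidef := by
  refine Matrix.PosSemidef.of_dotProduct_mulVec_nonneg ?_ ?_
  · apply IsHermitian.sub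
    · rw [smul_one_eq_diagonal]
      exact isHermitian_diagonal _
    · exact (ons_psd_vecMulVec _).isHermitian
  · intro x
    rw [star_trivial, sub_mulVec, smul_mulVec, one_mulVec, ons_vecMulVec_mulVec,
      dotProduct_sub, dotProduct_smul, dotProduct_smul, smul_eq_mul, smul_eq_mul]
    have hcs : ((v : Fin d → ℝ) ⬝ᵥ x) ^ 2 ≤
        ((v : Fin d → ℝ) ⬝ᵥ (v : Fin d → ℝ)) * (x ⬝ᵥ x) := by
      have h := Finset.sum_mul_sq_le_sq_mul_sq Finset.univ (v : Fin d → ℝ) x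
      simpa [dotProduct, sq] using h
    have hvv : (v : Fin d → ℝ) ⬝ᵥ (v : Fin d → ℝ) = ‖v‖ ^ 2 := ons_dot_self_norm v
    have hxx : 0 ≤ x ⬝ᵥ x := Finset.sum_nonneg fun i _ => mul_self_nonneg _
    have hG : ‖v‖ ^ 2 ≤ G ^ 2 := by
      have h0 : (0:ℝ) ≤ ‖v‖ := norm_nonneg _
      nlinarith
    rw [show x ⬝ᵥ (v : Fin d → ℝ) = (v : Fin d → ℝ) ⬝ᵥ x from dotProduct_comm _ _, ← sq]
    have h2 := mul_le_mul_of_nonneg_right hG hxx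
    rw [hvv] at hcs
    linarith

/-- Telescoping log-determinant bound used inside Proposition `dynamic_ONS`: with `A₀ = εI` and
`A_t = A_{t−1} + g_t g_tᵀ`, one has `Σ_t g_tᵀA_t⁻¹g_t ≤ log det A_T − log det A₀`; and if
moreover `‖g_t‖ ≤ G` for all `t`, then `Σ_t g_tᵀA_t⁻¹g_t ≤ d·log((TG² + ε)/ε)`. -/
theorem ons_log_det_bound {d : ℕ} (hd : 1 ≤ d) (ε : ℝ) (hε : 0 < ε)
    (T : ℕ) (g : ℕ → EuclideanSpace ℝ (Fin d))
    (A : ℕ → Matrix (Fin d) (Fin d) ℝ)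
    (hA0 : A 0 = ε • 1)
    (hArec : ∀ t ∈ Icc 1 T, A t = A (t - 1) + Matrix.vecMulVec (g t : Fin d → ℝ) (g t : Fin d → ℝ)) :
    (∑ t ∈ Icc 1 T, g t ⬝ᵥ (A t)⁻¹.mulVec (g t) ≤ Real.log (A T).det - Real.log (A 0).det)
    ∧ ∀ G : ℝ, (∀ t ∈ Icc 1 T, ‖g t‖ ≤ G) →
        ∑ t ∈ Icc 1 T, g t ⬝ᵥ (A t)⁻¹.mulVec (g t) ≤ d * Real.log ((T * G ^ 2 + ε) / ε) := by
  have hPD : ∀ t, t ≤ T → (A t).PosDef := by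
    intro t
    induction t with
    | zero =>
      intro _
      rw [hA0, smul_one_eq_diagonal]
      exact Matrix.PosDef.diagonal fun _ => hε
    | succ n ih =>
      intro h
      have hmem : n + 1 ∈ Icc 1 T := mem_Icc.mpr ⟨Nat.succ_le_succ (Nat.zero_le n), h⟩
      rw [hArec _ hmem]
      simp only [Nat.add_sub_cancel]
      exact (ons_key (ih (Nat.le_of_succ_le h)) _).1
  have part1 : ∑ t ∈ Icc 1 T, g t ⬝ᵥ (A t)⁻¹.mulVec (g t) ≤
      Real.log (A T).det - Real.log (A 0).det := by
    have hstep : ∀ t ∈ Icc 1 T, g t ⬝ᵥ (A t)⁻¹.mulVec (g t) ≤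
        Real.log (A t).det - Real.log (A (t - 1)).det := by
      intro t ht
      obtain ⟨h1, h2⟩ := mem_Icc.mp ht
      have hB : (A (t - 1)).PosDef := hPD (t - 1) (le_trans (Nat.sub_le t 1) h2)
      rw [hArec t ht]
      exact (ons_key hB _).2
    calc ∑ t ∈ Icc 1 T, g t ⬝ᵥ (A t)⁻¹.mulVec (g t)
        ≤ ∑ t ∈ Icc 1 T, (Real.log (A t).det - Real.log (A (t - 1)).det) :=
          Finset.sum_le_sum hstep
      _ = ∑ i ∈ range T, (Real.log (A (i + 1)).det - Real.log (A i).det) := by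
          rw [← Finset.Ico_add_one_right_eq_Icc, Finset.sum_Ico_eq_sum_range]
          exact Finset.sum_congr (by norm_num) fun i _ => by
            rw [Nat.add_comm 1 i, Nat.add_sub_cancel]
      _ = Real.log (A T).det - Real.log (A 0).det :=
          Finset.sum_range_sub (fun n => Real.log (A n).det) T
  refine ⟨part1, ?_⟩
  intro G hG
  have claim : ∀ t, t ≤ T →
      ((ε + t * G ^ 2) • (1 : Matrix (Fin d) (Fin d) ℝ) - A t).PosSemidef := by
    intro t
    induction t with
    | zero =>
      intro _
      have : ((ε + (0 : ℕ) * G ^ 2) • (1 : Matrix (Fin d) (Fin d) ℝ) - A 0) = 0 := by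
        rw [hA0]
        push_cast
        rw [zero_mul, add_zero, sub_self]
      rw [this]
      exact Matrix.PosSemidef.zero
    | succ n ih =>
      intro h
      have hmem : n + 1 ∈ Icc 1 T := mem_Icc.mpr ⟨Nat.succ_le_succ (Nat.zero_le n), h⟩
      rw [hArec _ hmem]
      simp only [Nat.add_sub_cancel]
      have hsplit : ((ε + ((n : ℕ) + 1 : ℕ) * G ^ 2) • (1 : Matrix (Fin d) (Fin d) ℝ)
          - (A n + vecMulVec (g (n + 1) : Fin d → ℝ) (g (n + 1) : Fin d → ℝ)))
          = ((ε + n * G ^ 2) • 1 - A n)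
            + (G ^ 2 • 1 - vecMulVec (g (n + 1) : Fin d → ℝ) (g (n + 1) : Fin d → ℝ)) := by
        push_cast
        module
      rw [hsplit]
      exact (ih (Nat.le_of_succ_le h)).add (ons_psd_sub (g (n + 1)) (hG _ hmem))
  have hc0 : (0 : ℝ) < ε + T * G ^ 2 := by positivity
  have hdetle : (A T).det ≤ (ε + T * G ^ 2) ^ d :=
    ons_det_le (hPD T le_rfl).posSemidef (claim T le_rfl)
  have hdet0 : (A 0).det = ε ^ d := by
    rw [hA0, det_smul, det_one, mul_one, Fintype.card_fin]
  have hlog1 : Real.log (A T).det ≤ d * Real.log (ε + T * G ^ 2) := by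
    calc Real.log (A T).det ≤ Real.log ((ε + T * G ^ 2) ^ d) :=
          Real.log_le_log (hPD T le_rfl).det_pos hdetle
      _ = d * Real.log (ε + T * G ^ 2) := by rw [Real.log_pow]
  have hlog0 : Real.log (A 0).det = d * Real.log ε := by rw [hdet0, Real.log_pow]
  have hfin : Real.log ((T * G ^ 2 + ε) / ε) = Real.log (ε + T * G ^ 2) - Real.log ε := by
    rw [Real.log_div (by linarith) hε.ne', add_comm]
  calc ∑ t ∈ Icc 1 T, g t ⬝ᵥ (A t)⁻¹.mulVec (g t)
      ≤ Real.log (A T).det - Real.log (A 0).det := part1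
    _ ≤ d * Real.log (ε + T * G ^ 2) - d * Real.log ε := by rw [hlog0]; linarith
    _ = d * Real.log ((T * G ^ 2 + ε) / ε) := by rw [hfin]; ring
end

section
/- Let (Ω, 𝒜, P) be a probability space with a filtration (ℱ_t)_{t≥0}, K ⊆ ℝ^d a convex set of diameter at most D > 0, and λ, G > 0 with λ ≤ 6G². For each t ≥ 1 let ℓ_t : Ω × ℝ^d → ℝ be such that ω ↦ ℓ_t(ω, ·) and its gradient are jointly measurable and ℱ_t-measurable in ω, and assume that almost surely: (i) ℓ_t(ω, ·) is differentiable and λ-strongly convex on K in the paper's convention (ℓ_t(ω, μ) − ℓ_t(ω, μ₀) ≤ ⟨∇ℓ_t(ω, μ), μ − μ₀⟩ − λ‖μ − μ₀‖² for μ, μ₀ ∈ K); (ii) ‖∇ℓ_t(ω, x)‖ ≤ G for all x ∈ K; and assume ω ↦ sup_{x∈K}|ℓ_t(ω, x)| is integrable. Let (μ̂_t)_{t≥1} and (μ_t)_{t≥1} be sequences of K-valued random variables with μ̂_t and μ_t ℱ_{t−1}-measurable. Then for every δ ∈ (0,1), with probability at least 1 − 2δ the following holds simultaneously for every T ≥ 1: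 Σ_{t=1}^{T} E[ℓ_t(·, μ̂_t) | ℱ_{t−1}] − Σ_{t=1}^{T} E[ℓ_t(·, μ_t) | ℱ_{t−1}] ≤ Σ_{t=1}^{T} ⟨∇ℓ_t(·, μ̂_t), μ̂_t − μ_t⟩ + (2(G·D)² + 6G²/λ)·log(1/δ). -/
open MeasureTheory RealInnerProductSpace Finset
set_option maxHeartbeats 2000000

lemma exp_le_quad {x : ℝ} (hx : |x| ≤ 1) : Real.exp x ≤ 1 + x + x ^ 2 := by
  have h := Real.exp_bound hx (by norm_num : 0 < 2)
  have h2 : ∑ i ∈ range 2, x ^ i / (Nat.factorial i) = 1 + x := by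
    simp [Finset.sum_range_succ, Nat.factorial]
  rw [h2] at h
  have h3 : |x| ^ 2 * ((Nat.succ 2 : ℕ) / ((Nat.factorial 2 : ℕ) * (2 : ℕ) : ℝ)) ≤ x ^ 2 := by
    rw [sq_abs]; norm_num [Nat.factorial]
    nlinarith [sq_nonneg x]
  have h4 := (abs_sub_le_iff.mp h).1
  nlinarith [sq_nonneg x]

lemma ville {Ω : Type*} {m0 : MeasurableSpace Ω} {P : Measure Ω} [IsProbabilityMeasure P]
    {ℱ : Filtration ℕ m0} {f : ℕ → Ω → ℝ} (hf : Supermartingale f ℱ P)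
    (hnonneg : ∀ n ω, 0 ≤ f n ω) {ε : ℝ} (hε : 0 < ε) :
    P {ω | ∃ k, ε ≤ f k ω} ≤ ENNReal.ofReal ((∫ ω, f 0 ω ∂P) / ε) := by
  have hmeas : ∀ k, MeasurableSet {ω | ε ≤ f k ω} := fun k =>
    measurableSet_le measurable_const ((hf.stronglyMeasurable k).measurable.mono (ℱ.le k) le_rfl)
  have key : ∀ n, P {ω | ∃ k ≤ n, ε ≤ f k ω} ≤ ENNReal.ofReal ((∫ ω, f 0 ω ∂P) / ε) := by
    intro n
    set τ : Ω → WithTop ℕ := fun ω => ((hittingBtwn f (Set.Ici ε) 0 n ω : ℕ) : WithTop ℕ) with hτdef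
    have hτ : IsStoppingTime ℱ τ := hittingBtwn_isStoppingTime hf.stronglyAdapted.adapted measurableSet_Ici
    have hτn : ∀ ω, τ ω ≤ n := fun ω => WithTop.coe_le_coe.mpr (hittingBtwn_le ω)
    have hsub := hf.neg
    have hint_sv : Integrable (stoppedValue f τ) P := by
      have := (hsub.integrable_stoppedValue hτ hτn).neg
      have heq : stoppedValue f τ = -stoppedValue (-f) τ := by
        funext ω; simp [stoppedValue]
      rwa [heq]
    have hmono := hsub.expected_stoppedValue_mono (isStoppingTime_const ℱ 0) hτ
      (fun ω => WithTop.coe_le_coe.mpr (Nat.zero_le _)) hτn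
    have hstop : ∫ ω, stoppedValue f τ ω ∂P ≤ ∫ ω, f 0 ω ∂P := by
      have h0 : stoppedValue (-f) (fun _ => (WithTop.some 0 : WithTop ℕ)) = fun ω => -(f 0 ω) := by
        funext ω; simp [stoppedValue]
      have h1 : stoppedValue (-f) τ = fun ω => -(stoppedValue f τ ω) := by
        funext ω; simp [stoppedValue]
      rw [h0, h1, integral_neg, integral_neg] at hmono
      linarith
    set E := {ω | ∃ k ≤ n, ε ≤ f k ω} with hE
    have hEmeas : MeasurableSet E := by
      have : E = ⋃ k ∈ Set.Iic n, {ω | ε ≤ f k ω} := by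
        ext ω; simp [hE]
      rw [this]
      exact MeasurableSet.biUnion (Set.to_countable _) fun k _ => hmeas k
    have hEbound : ∀ ω ∈ E, ε ≤ stoppedValue f τ ω := by
      intro ω hω
      obtain ⟨k, hk, hk2⟩ := hω
      exact stoppedValue_hittingBtwn_mem ⟨k, ⟨Nat.zero_le _, hk⟩, hk2⟩
    have hset : ε * (P E).toReal ≤ ∫ ω in E, stoppedValue f τ ω ∂P :=
      by rw [mul_comm]; exact setIntegral_ge_of_const_le hEmeas (measure_ne_top _ _) hEbound hint_sv.integrableOn
    have hfull : ∫ ω in E, stoppedValue f τ ω ∂P ≤ ∫ ω, stoppedValue f τ ω ∂P := by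
      apply setIntegral_le_integral hint_sv
      filter_upwards with ω using hnonneg _ ω
    have hle : (P E).toReal ≤ (∫ ω, f 0 ω ∂P) / ε := by
      rw [le_div_iff₀ hε]
      nlinarith [hset, hfull, hstop]
    exact (ENNReal.le_ofReal_iff_toReal_le (measure_ne_top _ _)
      (div_nonneg (integral_nonneg fun ω => hnonneg 0 ω) hε.le)).mpr hle
  have hunion : {ω | ∃ k, ε ≤ f k ω} = ⋃ n, {ω | ∃ k ≤ n, ε ≤ f k ω} := by
    ext ω
    simp only [Set.mem_setOf_eq, Set.mem_iUnion]
    exact ⟨fun ⟨k, hk⟩ => ⟨k, k, le_rfl, hk⟩, fun ⟨n, k, _, hk⟩ => ⟨k, hk⟩⟩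
  rw [hunion]
  rw [Directed.measure_iUnion (Monotone.directed_le fun a b hab ω hω => ?_)]
  · exact iSup_le key
  · obtain ⟨k, hk, hk2⟩ := hω
    exact ⟨k, hk.trans hab, hk2⟩

/-- Proposition `SOCO_with_Azuma`: for `ℱ`-adapted random `λ`-strongly convex losses (paper's
convention) with `G`-bounded gradients on a convex set `K ⊆ ℝ^d` of diameter at most `D`
(with `λ ≤ 6G²`), and predictable `K`-valued sequences `μ̂_t`, `μ_t`, with probability at least
`1 − 2δ` it holds simultaneously for every `T ≥ 1` that
`Σ_t E[ℓ_t(μ̂_t)|ℱ_{t−1}] − Σ_t E[ℓ_t(μ_t)|ℱ_{t−1}]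
  ≤ Σ_t ⟨∇ℓ_t(μ̂_t), μ̂_t − μ_t⟩ + (2(GD)² + 6G²/λ)·log(1/δ)`. -/
theorem soco_with_azuma {d : ℕ} {Ω : Type*} [m0 : MeasurableSpace Ω]
    (P : Measure Ω) [IsProbabilityMeasure P] (ℱ : Filtration ℕ m0)
    (K : Set (EuclideanSpace ℝ (Fin d))) (hK : Convex ℝ K)
    (D : ℝ) (hD : 0 < D) (hdiam : ∀ x ∈ K, ∀ y ∈ K, ‖x - y‖ ≤ D)
    (lam G : ℝ) (hlam : 0 < lam) (hG : 0 < G) (hlamG : lam ≤ 6 * G ^ 2)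
    (ℓ : ℕ → Ω → EuclideanSpace ℝ (Fin d) → ℝ)
    (g : ℕ → Ω → EuclideanSpace ℝ (Fin d) → EuclideanSpace ℝ (Fin d))
    (hmeasℓ : ∀ t, 1 ≤ t →
      @Measurable (Ω × EuclideanSpace ℝ (Fin d)) ℝ ((ℱ t).prod inferInstance) inferInstance
        (fun q => ℓ t q.1 q.2))
    (hmeasg : ∀ t, 1 ≤ t →
      @Measurable (Ω × EuclideanSpace ℝ (Fin d)) (EuclideanSpace ℝ (Fin d))
        ((ℱ t).prod inferInstance) inferInstance (fun q => g t q.1 q.2))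
    (has : ∀ᵐ ω ∂P, ∀ t, 1 ≤ t →
      (∀ x, HasGradientAt (ℓ t ω) (g t ω x) x) ∧
      (∀ μ ∈ K, ∀ μ₀ ∈ K, ℓ t ω μ - ℓ t ω μ₀ ≤ ⟪g t ω μ, μ - μ₀⟫ - lam * ‖μ - μ₀‖ ^ 2) ∧
      (∀ x ∈ K, ‖g t ω x‖ ≤ G))
    (hint : ∀ t, 1 ≤ t → Integrable (fun ω => ⨆ x ∈ K, |ℓ t ω x|) P)
    (p μc : ℕ → Ω → EuclideanSpace ℝ (Fin d))
    (hpK : ∀ t, 1 ≤ t → ∀ ω, p t ω ∈ K) (hμcK : ∀ t, 1 ≤ t → ∀ ω, μc t ω ∈ K)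
    (hpmeas : ∀ t, 1 ≤ t → @Measurable Ω (EuclideanSpace ℝ (Fin d)) (ℱ (t - 1)) _ (p t))
    (hμcmeas : ∀ t, 1 ≤ t → @Measurable Ω (EuclideanSpace ℝ (Fin d)) (ℱ (t - 1)) _ (μc t))
    (δ : ℝ) (hδ0 : 0 < δ) (hδ1 : δ < 1) :
    ENNReal.ofReal (1 - 2 * δ) ≤
      P {ω | ∀ T, 1 ≤ T →
        ∑ t ∈ Icc 1 T, (P[fun ω' => ℓ t ω' (p t ω') | ℱ (t - 1)]) ω
          - ∑ t ∈ Icc 1 T, (P[fun ω' => ℓ t ω' (μc t ω') | ℱ (t - 1)]) ω ≤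
        ∑ t ∈ Icc 1 T, ⟪g t ω (p t ω), p t ω - μc t ω⟫
          + (2 * (G * D) ^ 2 + 6 * G ^ 2 / lam) * Real.log (1 / δ)} := by
  classical
  -- constants
  set η : ℝ := min (lam / G ^ 2) (1 / (2 * G * D)) with hηdef
  have hη0 : 0 < η := lt_min (by positivity) (by positivity)
  have hηG2 : η * G ^ 2 ≤ lam := by
    have := min_le_left (lam / G ^ 2) (1 / (2 * G * D))
    rw [hηdef]
    calc min (lam / G ^ 2) (1 / (2 * G * D)) * G ^ 2 ≤ (lam / G ^ 2) * G ^ 2 := by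
          apply mul_le_mul_of_nonneg_right this (by positivity)
      _ = lam := by field_simp
  have hηGD : η * (G * D) ≤ 1 / 2 := by
    have := min_le_right (lam / G ^ 2) (1 / (2 * G * D))
    rw [hηdef]
    calc min (lam / G ^ 2) (1 / (2 * G * D)) * (G * D) ≤ (1 / (2 * G * D)) * (G * D) := by
          apply mul_le_mul_of_nonneg_right this (by positivity)
      _ = 1 / 2 := by field_simp
  have hC : 1 / η ≤ 2 * (G * D) ^ 2 + 6 * G ^ 2 / lam := by
    have h6 : (1 : ℝ) ≤ 6 * G ^ 2 / lam := by
      rw [le_div_iff₀ hlam]; linarith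
    rcases le_total (lam / G ^ 2) (1 / (2 * G * D)) with h | h
    · rw [hηdef, min_eq_left h]
      have : 1 / (lam / G ^ 2) = G ^ 2 / lam := by field_simp
      rw [this]
      have h5 : 0 ≤ G ^ 2 / lam := div_nonneg (sq_nonneg G) hlam.le
      have h6' : G ^ 2 / lam ≤ 6 * G ^ 2 / lam := by
        rw [show (6 : ℝ) * G ^ 2 / lam = 6 * (G ^ 2 / lam) by ring]
        linarith
      nlinarith [sq_nonneg (G * D)]
    · rw [hηdef, min_eq_right h]
      have h1 : 1 / (1 / (2 * G * D)) = 2 * G * D := by field_simp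
      rw [h1]
      nlinarith [sq_nonneg (G * D - 1)]
  -- measurability
  have hpm : ∀ t, 1 ≤ t → Measurable[ℱ t] (p t) := fun t ht =>
    (hpmeas t ht).mono (ℱ.mono (Nat.sub_le t 1)) le_rfl
  have hμm : ∀ t, 1 ≤ t → Measurable[ℱ t] (μc t) := fun t ht =>
    (hμcmeas t ht).mono (ℱ.mono (Nat.sub_le t 1)) le_rfl
  have hgp : ∀ t, 1 ≤ t → Measurable[ℱ t] (fun ω => g t ω (p t ω)) := fun t ht =>
    (hmeasg t ht).comp (measurable_id.prodMk (hpm t ht))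
  have hlp : ∀ t, 1 ≤ t → Measurable[ℱ t] (fun ω => ℓ t ω (p t ω)) := fun t ht =>
    (hmeasℓ t ht).comp (measurable_id.prodMk (hpm t ht))
  have hlc : ∀ t, 1 ≤ t → Measurable[ℱ t] (fun ω => ℓ t ω (μc t ω)) := fun t ht =>
    (hmeasℓ t ht).comp (measurable_id.prodMk (hμm t ht))
  set Y : ℕ → Ω → ℝ := fun t ω => ⟪g t ω (p t ω), p t ω - μc t ω⟫ with hYdef
  have hYm : ∀ t, 1 ≤ t → Measurable[ℱ t] (Y t) := fun t ht =>
    (hgp t ht).inner ((hpm t ht).sub (hμm t ht))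
  have hsqm : ∀ t, 1 ≤ t → Measurable[ℱ (t - 1)] (fun ω => ‖p t ω - μc t ω‖ ^ 2) := by
    intro t ht
    have h1 : Measurable[ℱ (t - 1)] (fun ω => p t ω - μc t ω) := (hpmeas t ht).sub (hμcmeas t ht)
    have h2 : Measurable[ℱ (t - 1)] (fun ω => ‖p t ω - μc t ω‖) := measurable_norm.comp h1
    exact (measurable_id.pow_const 2).comp h2
  -- a.e. pointwise facts
  have hae : ∀ᵐ ω ∂P, ∀ t, 1 ≤ t → |Y t ω| ≤ G * D ∧
      (Y t ω) ^ 2 ≤ G ^ 2 * ‖p t ω - μc t ω‖ ^ 2 ∧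
      ℓ t ω (p t ω) - ℓ t ω (μc t ω) ≤ Y t ω - lam * ‖p t ω - μc t ω‖ ^ 2 := by
    filter_upwards [has] with ω hω t ht
    obtain ⟨hgrad, hsc, hgb⟩ := hω t ht
    have hgn : ‖g t ω (p t ω)‖ ≤ G := hgb _ (hpK t ht ω)
    have hΔn : ‖p t ω - μc t ω‖ ≤ D := hdiam _ (hpK t ht ω) _ (hμcK t ht ω)
    have hinn := abs_real_inner_le_norm (g t ω (p t ω)) (p t ω - μc t ω)
    have hY1 : |Y t ω| ≤ G * D := by
      refine hinn.trans ?_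
      exact mul_le_mul hgn hΔn (norm_nonneg _) hG.le
    refine ⟨hY1, ?_, hsc _ (hpK t ht ω) _ (hμcK t ht ω)⟩
    have e1 : |Y t ω| ^ 2 ≤ (‖g t ω (p t ω)‖ * ‖p t ω - μc t ω‖) ^ 2 :=
      pow_le_pow_left₀ (abs_nonneg _) hinn 2
    have e2 : (‖g t ω (p t ω)‖ * ‖p t ω - μc t ω‖) ^ 2
        = ‖g t ω (p t ω)‖ ^ 2 * ‖p t ω - μc t ω‖ ^ 2 := by ring
    have e3 : ‖g t ω (p t ω)‖ ^ 2 ≤ G ^ 2 := pow_le_pow_left₀ (norm_nonneg _) hgn 2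
    have e4 : ‖g t ω (p t ω)‖ ^ 2 * ‖p t ω - μc t ω‖ ^ 2 ≤ G ^ 2 * ‖p t ω - μc t ω‖ ^ 2 :=
      mul_le_mul_of_nonneg_right e3 (sq_nonneg _)
    have e5 := sq_abs (Y t ω)
    linarith
  -- integrability
  have hYint : ∀ t, 1 ≤ t → Integrable (Y t) P := by
    intro t ht
    refine Integrable.mono' (integrable_const (G * D))
      (((hYm t ht).mono (ℱ.le t) le_rfl).aestronglyMeasurable) ?_
    filter_upwards [hae] with ω hω using by
      simpa [Real.norm_eq_abs] using (hω t ht).1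
  have hsqint : ∀ t, 1 ≤ t → Integrable (fun ω => ‖p t ω - μc t ω‖ ^ 2) P := by
    intro t ht
    refine Integrable.mono' (integrable_const (D ^ 2))
      (((hsqm t ht).mono (ℱ.le _) le_rfl).aestronglyMeasurable) ?_
    filter_upwards with ω
    have h1 : ‖p t ω - μc t ω‖ ≤ D := hdiam _ (hpK t ht ω) _ (hμcK t ht ω)
    have h0 := norm_nonneg (p t ω - μc t ω)
    rw [Real.norm_eq_abs, abs_of_nonneg (by positivity : (0:ℝ) ≤ ‖p t ω - μc t ω‖ ^ 2)]
    nlinarith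
  have hY2int : ∀ t, 1 ≤ t → Integrable (fun ω => (Y t ω) ^ 2) P := by
    intro t ht
    refine Integrable.mono' (integrable_const ((G * D) ^ 2))
      ((((measurable_id.pow_const 2).comp (hYm t ht)).mono (ℱ.le _) le_rfl).aestronglyMeasurable) ?_
    filter_upwards [hae] with ω hω
    have h1 := (hω t ht).1
    rw [Real.norm_eq_abs, abs_of_nonneg (sq_nonneg (Y t ω))]
    nlinarith [abs_nonneg (Y t ω), sq_abs (Y t ω)]
  -- integrability of composed losses
  have hℓint : ∀ (q : ℕ → Ω → EuclideanSpace ℝ (Fin d)), (∀ t, 1 ≤ t → ∀ ω, q t ω ∈ K) →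
      (∀ t, 1 ≤ t → Measurable[ℱ t] (fun ω => ℓ t ω (q t ω))) →
      ∀ t, 1 ≤ t → Integrable (fun ω => ℓ t ω (q t ω)) P := by
    intro q hqK hqm t ht
    refine Integrable.mono' (hint t ht)
      (((hqm t ht).mono (ℱ.le _) le_rfl).aestronglyMeasurable) ?_
    filter_upwards [has] with ω hω
    obtain ⟨hgrad, _, hgb⟩ := hω t ht
    have hlip : ∀ x ∈ K, ∀ y ∈ K, ‖ℓ t ω y - ℓ t ω x‖ ≤ G * ‖y - x‖ := by
      intro x hx y hy
      refine hK.norm_image_sub_le_of_norm_hasFDerivWithin_le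
        (fun z _ => (hgrad z).hasFDerivAt.hasFDerivWithinAt) (fun z hz => ?_) hx hy
      rw [LinearIsometryEquiv.norm_map]
      exact hgb z hz
    have hx₀K : q t ω ∈ K := hqK t ht ω
    set x₀ := q t ω with hx₀
    have hBsup : ∀ x, (⨆ _ : x ∈ K, |ℓ t ω x|) ≤ |ℓ t ω x₀| + G * D := by
      intro x
      by_cases hx : x ∈ K
      · haveI : Nonempty (x ∈ K) := ⟨hx⟩
        rw [ciSup_const]
        have h1 := hlip x₀ hx₀K x hx
        have h2 : ‖x - x₀‖ ≤ D := hdiam _ hx _ hx₀K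
        rw [Real.norm_eq_abs] at h1
        have h3 : G * ‖x - x₀‖ ≤ G * D := mul_le_mul_of_nonneg_left h2 hG.le
        have h4 := abs_sub_abs_le_abs_sub (ℓ t ω x) (ℓ t ω x₀)
        linarith
      · haveI : IsEmpty (x ∈ K) := ⟨hx⟩
        rw [Real.iSup_of_isEmpty]
        positivity
    have hbdd : BddAbove (Set.range fun x => ⨆ _ : x ∈ K, |ℓ t ω x|) :=
      ⟨|ℓ t ω x₀| + G * D, by rintro y ⟨x, rfl⟩; exact hBsup x⟩
    have hle : |ℓ t ω x₀| ≤ ⨆ x ∈ K, |ℓ t ω x| := by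
      have h1 : (⨆ _ : x₀ ∈ K, |ℓ t ω x₀|) ≤ ⨆ x ∈ K, |ℓ t ω x| := le_ciSup hbdd x₀
      haveI : Nonempty (x₀ ∈ K) := ⟨hx₀K⟩
      rwa [ciSup_const] at h1
    simpa [Real.norm_eq_abs] using hle
  have hlpint : ∀ t, 1 ≤ t → Integrable (fun ω => ℓ t ω (p t ω)) P := hℓint p hpK hlp
  have hlcint : ∀ t, 1 ≤ t → Integrable (fun ω => ℓ t ω (μc t ω)) P := hℓint μc hμcK hlc
  -- the predictable projection A
  set A : ℕ → Ω → ℝ := fun t => P[Y t | ℱ (t - 1)] with hAdef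
  have hAsm : ∀ t, StronglyMeasurable[ℱ (t - 1)] (A t) := fun t => stronglyMeasurable_condExp
  have hAb : ∀ t, 1 ≤ t → ∀ᵐ ω ∂P, |A t ω| ≤ G * D := by
    intro t ht
    have hup : A t ≤ᵐ[P] fun _ => G * D := by
      have h1 : Y t ≤ᵐ[P] fun _ => G * D := by
        filter_upwards [hae] with ω hω using (abs_le.mp (hω t ht).1).2
      have h2 := condExp_mono (m := ℱ (t - 1)) (hYint t ht) (integrable_const _) h1
      rwa [condExp_const (ℱ.le _)] at h2
    have hlo : (fun _ : Ω => -(G * D)) ≤ᵐ[P] A t := by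
      have h1 : (fun _ : Ω => -(G * D)) ≤ᵐ[P] Y t := by
        filter_upwards [hae] with ω hω using (abs_le.mp (hω t ht).1).1
      have h2 := condExp_mono (m := ℱ (t - 1)) (integrable_const _) (hYint t ht) h1
      rwa [condExp_const (ℱ.le _)] at h2
    filter_upwards [hup, hlo] with ω h1 h2
    exact abs_le.mpr ⟨h2, h1⟩
  -- increments of the exponential supermartingale
  set c : ℕ → Ω → ℝ := fun t ω =>
    η * (A t ω - Y t ω) - η ^ 2 * (G ^ 2 * ‖p t ω - μc t ω‖ ^ 2) with hcdef
  set U : ℕ → Ω → ℝ := fun t ω => Real.exp (c t ω) with hUdef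
  have hAm : ∀ t, Measurable[ℱ (t - 1)] (A t) := fun t => (hAsm t).measurable
  have hYm0 : ∀ t, 1 ≤ t → Measurable (Y t) := fun t ht => (hYm t ht).mono (ℱ.le t) le_rfl
  have hsqm0 : ∀ t, 1 ≤ t → Measurable (fun ω => ‖p t ω - μc t ω‖ ^ 2) := fun t ht =>
    (hsqm t ht).mono (ℱ.le _) le_rfl
  have hUcond : ∀ t, 1 ≤ t → P[U t | ℱ (t - 1)] ≤ᵐ[P] fun _ => 1 := by
    intro t ht
    set f₀ : Ω → ℝ := fun ω =>
      Real.exp (η * A t ω - η ^ 2 * (G ^ 2 * ‖p t ω - μc t ω‖ ^ 2)) with hf₀def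
    set e : Ω → ℝ := fun ω => Real.exp (-(η * Y t ω)) with hedef
    have hU_eq : U t = f₀ * e := by
      funext ω
      show Real.exp (c t ω) = f₀ ω * e ω
      rw [hf₀def, hedef, ← Real.exp_add, hcdef]
      congr 1
      ring
    have hf₀sm : StronglyMeasurable[ℱ (t - 1)] f₀ := by
      apply Continuous.comp_stronglyMeasurable Real.continuous_exp
      exact ((hAsm t).const_mul η).sub
        ((((hsqm t ht).stronglyMeasurable).const_mul (G ^ 2)).const_mul (η ^ 2))
    have hem : Measurable e := Real.measurable_exp.comp (((hYm0 t ht).const_mul η).neg)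
    have hembd : ∀ᵐ ω ∂P, e ω ≤ Real.exp 1 := by
      filter_upwards [hae] with ω hω
      have h1 := (hω t ht).1
      simp only [hedef]
      apply Real.exp_le_exp.mpr
      have h2 : -(η * Y t ω) ≤ |η * Y t ω| := neg_le_abs _
      rw [abs_mul, abs_of_nonneg hη0.le] at h2
      have h3 : η * |Y t ω| ≤ η * (G * D) := mul_le_mul_of_nonneg_left h1 hη0.le
      linarith [hηGD]
    have heint : Integrable e P := by
      refine Integrable.mono' (integrable_const (Real.exp 1)) hem.aestronglyMeasurable ?_
      filter_upwards [hembd] with ω hω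
      rwa [Real.norm_eq_abs, abs_of_pos (Real.exp_pos _)]
    have hf₀bd : ∀ᵐ ω ∂P, f₀ ω ≤ Real.exp 1 := by
      filter_upwards [hAb t ht] with ω hω
      simp only [hf₀def]
      apply Real.exp_le_exp.mpr
      have h2 : η * A t ω ≤ |η * A t ω| := le_abs_self _
      rw [abs_mul, abs_of_nonneg hη0.le] at h2
      have h3 : η * |A t ω| ≤ η * (G * D) := mul_le_mul_of_nonneg_left hω hη0.le
      have h4 : 0 ≤ η ^ 2 * (G ^ 2 * ‖p t ω - μc t ω‖ ^ 2) := by positivity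
      linarith [hηGD]
    have hf₀int : Integrable f₀ P := by
      refine Integrable.mono' (integrable_const (Real.exp 1))
        ((hf₀sm.mono (ℱ.le _)).aestronglyMeasurable) ?_
      filter_upwards [hf₀bd] with ω hω
      rwa [Real.norm_eq_abs, abs_of_pos (Real.exp_pos _)]
    have hUint' : Integrable (f₀ * e) P := by
      refine Integrable.mono' (integrable_const (Real.exp 1 * Real.exp 1))
        (((hf₀sm.mono (ℱ.le _)).aestronglyMeasurable).mul hem.aestronglyMeasurable) ?_
      filter_upwards [hembd, hf₀bd] with ω h1 h2
      rw [Pi.mul_apply, Real.norm_eq_abs, abs_of_pos (by positivity : (0:ℝ) < f₀ ω * e ω)]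
      exact mul_le_mul h2 h1 (Real.exp_pos _).le (Real.exp_pos _).le
    have hmul : P[f₀ * e | ℱ (t - 1)] =ᵐ[P] f₀ * P[e | ℱ (t - 1)] :=
      condExp_mul_of_stronglyMeasurable_left hf₀sm hUint' heint
    -- quadratic domination of e
    set q1 : Ω → ℝ := fun ω => 1 + η ^ 2 * (G ^ 2 * ‖p t ω - μc t ω‖ ^ 2) with hq1def
    have hq1sm : StronglyMeasurable[ℱ (t - 1)] q1 := by
      apply StronglyMeasurable.add
      · exact stronglyMeasurable_const
      · exact (((hsqm t ht).stronglyMeasurable).const_mul (G ^ 2)).const_mul (η ^ 2)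
    have hq1int : Integrable q1 P := by
      refine Integrable.mono' (integrable_const (1 + η ^ 2 * (G ^ 2 * D ^ 2)))
        (((hq1sm.mono (ℱ.le _))).aestronglyMeasurable) ?_
      filter_upwards with ω
      have h1 : ‖p t ω - μc t ω‖ ≤ D := hdiam _ (hpK t ht ω) _ (hμcK t ht ω)
      have h0 := norm_nonneg (p t ω - μc t ω)
      simp only [hq1def, Real.norm_eq_abs]
      rw [abs_of_pos (by positivity)]
      have hsq : ‖p t ω - μc t ω‖ ^ 2 ≤ D ^ 2 := by nlinarith
      have h2' : η ^ 2 * (G ^ 2 * ‖p t ω - μc t ω‖ ^ 2) ≤ η ^ 2 * (G ^ 2 * D ^ 2) :=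
        mul_le_mul_of_nonneg_left (mul_le_mul_of_nonneg_left hsq (sq_nonneg G)) (sq_nonneg η)
      linarith
    have hq2int : Integrable (fun ω => η * Y t ω) P := (hYint t ht).const_mul η
    have hqe : e ≤ᵐ[P] fun ω => q1 ω - η * Y t ω := by
      filter_upwards [hae] with ω hω
      obtain ⟨h1, h2, _⟩ := hω t ht
      have hxle : |(-(η * Y t ω))| ≤ 1 := by
        rw [abs_neg, abs_mul, abs_of_nonneg hη0.le]
        have h3 : η * |Y t ω| ≤ η * (G * D) := mul_le_mul_of_nonneg_left h1 hη0.le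
        linarith [hηGD]
      have h4 := exp_le_quad hxle
      have h5 : η ^ 2 * Y t ω ^ 2 ≤ η ^ 2 * (G ^ 2 * ‖p t ω - μc t ω‖ ^ 2) :=
        mul_le_mul_of_nonneg_left h2 (sq_nonneg η)
      simp only [hedef, hq1def]
      nlinarith [h4]
    have hRint : Integrable (fun ω => q1 ω - η * Y t ω) P := hq1int.sub hq2int
    have hmono := condExp_mono (m := ℱ (t - 1)) heint hRint hqe
    have hRcond : P[fun ω => q1 ω - η * Y t ω | ℱ (t - 1)]
        =ᵐ[P] fun ω => q1 ω - η * A t ω := by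
      have hsub : P[fun ω => q1 ω - η * Y t ω | ℱ (t - 1)]
          =ᵐ[P] P[q1 | ℱ (t - 1)] - P[fun ω => η * Y t ω | ℱ (t - 1)] :=
        condExp_sub hq1int hq2int (ℱ (t - 1))
      have hq1c : P[q1 | ℱ (t - 1)] = q1 :=
        condExp_of_stronglyMeasurable (ℱ.le _) hq1sm hq1int
      have hq2c : P[fun ω => η * Y t ω | ℱ (t - 1)] =ᵐ[P] fun ω => η * A t ω :=
        condExp_smul (m := ℱ (t - 1)) (μ := P) η (Y t)
      filter_upwards [hsub, hq2c] with ω hω1 hω2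
      rw [hω1, Pi.sub_apply, hq1c, hω2]
    have hecond : P[e | ℱ (t - 1)] ≤ᵐ[P]
        fun ω => Real.exp (-(η * A t ω) + η ^ 2 * (G ^ 2 * ‖p t ω - μc t ω‖ ^ 2)) := by
      filter_upwards [hmono, hRcond] with ω hω1 hω2
      have h6 := Real.add_one_le_exp (-(η * A t ω) + η ^ 2 * (G ^ 2 * ‖p t ω - μc t ω‖ ^ 2))
      rw [hω2] at hω1
      simp only [hq1def] at hω1
      linarith
    have h1 : P[U t | ℱ (t - 1)] =ᵐ[P] f₀ * P[e | ℱ (t - 1)] := by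
      rw [hU_eq]; exact hmul
    filter_upwards [h1, hecond] with ω hω1 hω2
    calc (P[U t | ℱ (t - 1)]) ω = f₀ ω * (P[e | ℱ (t - 1)]) ω := hω1
      _ ≤ f₀ ω * Real.exp (-(η * A t ω) + η ^ 2 * (G ^ 2 * ‖p t ω - μc t ω‖ ^ 2)) :=
          mul_le_mul_of_nonneg_left hω2 (Real.exp_pos _).le
      _ = 1 := by
          simp only [hf₀def]
          rw [← Real.exp_add, show η * A t ω - η ^ 2 * (G ^ 2 * ‖p t ω - μc t ω‖ ^ 2) +
            (-(η * A t ω) + η ^ 2 * (G ^ 2 * ‖p t ω - μc t ω‖ ^ 2)) = 0 by ring, Real.exp_zero]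
  -- the exponential supermartingale
  set F : ℕ → Ω → ℝ := fun n ω => ∑ t ∈ Icc 1 n, c t ω with hFdef
  set M : ℕ → Ω → ℝ := fun n ω => Real.exp (F n ω) with hMdef
  have hcm : ∀ t, 1 ≤ t → Measurable[ℱ t] (c t) := by
    intro t ht
    have h1 : Measurable[ℱ t] (A t) := (hAm t).mono (ℱ.mono (Nat.sub_le t 1)) le_rfl
    have h2 : Measurable[ℱ t] (fun ω => ‖p t ω - μc t ω‖ ^ 2) :=
      (hsqm t ht).mono (ℱ.mono (Nat.sub_le t 1)) le_rfl
    exact ((h1.sub (hYm t ht)).const_mul η).sub ((h2.const_mul (G ^ 2)).const_mul (η ^ 2))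
  have hFm : ∀ n, Measurable[ℱ n] (F n) := by
    intro n
    apply Finset.measurable_sum
    intro t htm
    exact (hcm t (Finset.mem_Icc.mp htm).1).mono (ℱ.mono (Finset.mem_Icc.mp htm).2) le_rfl
  have hMadp : StronglyAdapted ℱ M := fun n => (Real.measurable_exp.comp (hFm n)).stronglyMeasurable
  have hAb' : ∀ᵐ ω ∂P, ∀ t, 1 ≤ t → |A t ω| ≤ G * D := by
    rw [ae_all_iff]
    intro t
    by_cases ht : 1 ≤ t
    · filter_upwards [hAb t ht] with ω h _
      exact h
    · filter_upwards with ω h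
      exact absurd h ht
  have hcb : ∀ᵐ ω ∂P, ∀ t, 1 ≤ t → |c t ω| ≤ 2 := by
    filter_upwards [hae, hAb'] with ω h1 h2 t ht
    have hA := h2 t ht
    have hYb := (h1 t ht).1
    have hsq : ‖p t ω - μc t ω‖ ^ 2 ≤ D ^ 2 := by
      have := hdiam _ (hpK t ht ω) _ (hμcK t ht ω)
      nlinarith [norm_nonneg (p t ω - μc t ω)]
    have e1 : |η * (A t ω - Y t ω)| ≤ 1 := by
      rw [abs_mul, abs_of_nonneg hη0.le]
      have h3 : |A t ω - Y t ω| ≤ |A t ω| + |Y t ω| := abs_sub _ _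
      have h4 : η * |A t ω - Y t ω| ≤ η * (2 * (G * D)) := by
        apply mul_le_mul_of_nonneg_left _ hη0.le
        linarith
      linarith [hηGD]
    have e2 : 0 ≤ η ^ 2 * (G ^ 2 * ‖p t ω - μc t ω‖ ^ 2) := by positivity
    have e3 : η ^ 2 * (G ^ 2 * ‖p t ω - μc t ω‖ ^ 2) ≤ 1 := by
      have h5 : η ^ 2 * (G ^ 2 * ‖p t ω - μc t ω‖ ^ 2) ≤ η ^ 2 * (G ^ 2 * D ^ 2) :=
        mul_le_mul_of_nonneg_left (mul_le_mul_of_nonneg_left hsq (sq_nonneg G)) (sq_nonneg η)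
      nlinarith [hηGD, mul_nonneg hη0.le (mul_nonneg hG.le hD.le)]
    simp only [hcdef]
    have := abs_sub (η * (A t ω - Y t ω)) (η ^ 2 * (G ^ 2 * ‖p t ω - μc t ω‖ ^ 2))
    rw [abs_of_nonneg e2] at this
    linarith
  have hMint : ∀ n, Integrable (M n) P := by
    intro n
    refine Integrable.mono' (integrable_const (Real.exp (2 * n)))
      ((Real.measurable_exp.comp ((hFm n).mono (ℱ.le n) le_rfl)).aestronglyMeasurable) ?_
    filter_upwards [hcb] with ω hω
    simp only [hMdef, hFdef]
    rw [Real.norm_eq_abs, abs_of_pos (Real.exp_pos _)]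
    apply Real.exp_le_exp.mpr
    calc ∑ t ∈ Icc 1 n, c t ω ≤ ∑ t ∈ Icc 1 n, 2 :=
          Finset.sum_le_sum fun t htm => le_of_abs_le (hω t (Finset.mem_Icc.mp htm).1)
      _ = (Icc 1 n).card • (2 : ℝ) := Finset.sum_const 2
      _ ≤ 2 * n := by
          rw [Nat.card_Icc, nsmul_eq_mul]
          simp only [Nat.add_sub_cancel]
          ring_nf
          norm_num
  have hMsuper : Supermartingale M ℱ P := by
    refine supermartingale_nat hMadp hMint ?_
    intro n
    have hsplit : M (n + 1) = M n * U (n + 1) := by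
      funext ω
      simp only [hMdef, hUdef, hFdef, Pi.mul_apply]
      rw [← Real.exp_add]
      congr 1
      exact Finset.sum_Icc_succ_top (by omega) _
    have hUint : Integrable (U (n + 1)) P := by
      refine Integrable.mono' (integrable_const (Real.exp 2))
        ((Real.measurable_exp.comp
          ((hcm (n + 1) (by omega)).mono (ℱ.le _) le_rfl)).aestronglyMeasurable) ?_
      filter_upwards [hcb] with ω hω
      simp only [hUdef]
      rw [Real.norm_eq_abs, abs_of_pos (Real.exp_pos _)]
      exact Real.exp_le_exp.mpr (le_of_abs_le (hω (n + 1) (by omega)))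
    have hmul := condExp_mul_of_stronglyMeasurable_left (hMadp n) (hsplit ▸ hMint (n + 1)) hUint
    have hUn := hUcond (n + 1) (by omega)
    rw [hsplit]
    filter_upwards [hmul, hUn] with ω hω1 hω2
    have hMpos : (0 : ℝ) ≤ M n ω := by
      simp only [hMdef]; exact (Real.exp_pos _).le
    calc (P[M n * U (n + 1) | ℱ n]) ω = M n ω * (P[U (n + 1) | ℱ n]) ω := hω1
      _ ≤ M n ω * 1 := mul_le_mul_of_nonneg_left hω2 hMpos
      _ = M n ω := mul_one _
  -- integral of M 0 is 1
  have hMnonneg : ∀ n ω, 0 ≤ M n ω := fun n ω => (Real.exp_pos _).le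
  have hM0 : ∫ ω, M 0 ω ∂P = 1 := by
    have : M 0 = fun _ => 1 := by
      funext ω
      simp only [hMdef, hFdef]
      rw [show Icc 1 0 = (∅ : Finset ℕ) by rfl, Finset.sum_empty, Real.exp_zero]
    rw [this]
    simp
  have hville := ville hMsuper hMnonneg (ε := 1 / δ) (by positivity)
  rw [hM0, one_div_one_div] at hville
  set Bad := {ω | ∃ k, 1 / δ ≤ M k ω} with hBaddef
  have hBadmeas : MeasurableSet Bad := by
    have : Bad = ⋃ k, {ω | 1 / δ ≤ M k ω} := by
      ext ω; simp [hBaddef]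
    rw [this]
    exact MeasurableSet.iUnion fun k =>
      measurableSet_le measurable_const (((hMadp k).measurable).mono (ℱ.le k) le_rfl)
  -- the per-step conditional inequality, a.e.
  have hEZ : ∀ t, 1 ≤ t → ∀ᵐ ω ∂P,
      (P[fun ω' => ℓ t ω' (p t ω') | ℱ (t - 1)]) ω
        - (P[fun ω' => ℓ t ω' (μc t ω') | ℱ (t - 1)]) ω
        ≤ A t ω - lam * ‖p t ω - μc t ω‖ ^ 2 := by
    intro t ht
    have hZint : Integrable (fun ω => ℓ t ω (p t ω) - ℓ t ω (μc t ω)) P :=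
      (hlpint t ht).sub (hlcint t ht)
    have hsub : P[fun ω => ℓ t ω (p t ω) - ℓ t ω (μc t ω) | ℱ (t - 1)]
        =ᵐ[P] P[fun ω => ℓ t ω (p t ω) | ℱ (t - 1)] - P[fun ω => ℓ t ω (μc t ω) | ℱ (t - 1)] :=
      condExp_sub (hlpint t ht) (hlcint t ht) (ℱ (t - 1))
    have hq2int : Integrable (fun ω => lam * ‖p t ω - μc t ω‖ ^ 2) P :=
      (hsqint t ht).const_mul lam
    have hRint : Integrable (fun ω => Y t ω - lam * ‖p t ω - μc t ω‖ ^ 2) P :=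
      (hYint t ht).sub hq2int
    have haeZ : (fun ω => ℓ t ω (p t ω) - ℓ t ω (μc t ω))
        ≤ᵐ[P] fun ω => Y t ω - lam * ‖p t ω - μc t ω‖ ^ 2 := by
      filter_upwards [hae] with ω hω using (hω t ht).2.2
    have hmono := condExp_mono (m := ℱ (t - 1)) hZint hRint haeZ
    have hsub2 : P[fun ω => Y t ω - lam * ‖p t ω - μc t ω‖ ^ 2 | ℱ (t - 1)]
        =ᵐ[P] P[Y t | ℱ (t - 1)] - P[fun ω => lam * ‖p t ω - μc t ω‖ ^ 2 | ℱ (t - 1)] :=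
      condExp_sub (hYint t ht) hq2int (ℱ (t - 1))
    have hsqc : P[fun ω => lam * ‖p t ω - μc t ω‖ ^ 2 | ℱ (t - 1)]
        = fun ω => lam * ‖p t ω - μc t ω‖ ^ 2 :=
      condExp_of_stronglyMeasurable (ℱ.le _)
        (((hsqm t ht).stronglyMeasurable).const_mul lam) hq2int
    filter_upwards [hsub, hmono, hsub2] with ω h1 h2 h3
    have e1 : (P[fun ω' => ℓ t ω' (p t ω') | ℱ (t - 1)]) ω
        - (P[fun ω' => ℓ t ω' (μc t ω') | ℱ (t - 1)]) ω
        = (P[fun ω => ℓ t ω (p t ω) - ℓ t ω (μc t ω) | ℱ (t - 1)]) ω := by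
      rw [h1, Pi.sub_apply]
    have e2 : (P[fun ω => Y t ω - lam * ‖p t ω - μc t ω‖ ^ 2 | ℱ (t - 1)]) ω
        = A t ω - lam * ‖p t ω - μc t ω‖ ^ 2 := by
      rw [h3, Pi.sub_apply, hsqc]
    rw [e1, ← e2]
    exact h2
  have hEZ' : ∀ᵐ ω ∂P, ∀ t, 1 ≤ t →
      (P[fun ω' => ℓ t ω' (p t ω') | ℱ (t - 1)]) ω
        - (P[fun ω' => ℓ t ω' (μc t ω') | ℱ (t - 1)]) ω
        ≤ A t ω - lam * ‖p t ω - μc t ω‖ ^ 2 := by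
    rw [ae_all_iff]
    intro t
    by_cases ht : 1 ≤ t
    · filter_upwards [hEZ t ht] with ω h _
      exact h
    · filter_upwards with ω h
      exact absurd h ht
  set S := {ω | ∀ t, 1 ≤ t →
      (P[fun ω' => ℓ t ω' (p t ω') | ℱ (t - 1)]) ω
        - (P[fun ω' => ℓ t ω' (μc t ω') | ℱ (t - 1)]) ω
        ≤ A t ω - lam * ‖p t ω - μc t ω‖ ^ 2} with hSdef
  have hSnull : P Sᶜ = 0 := by
    have h := ae_iff.mp hEZ'
    convert h using 2
    rfl
  -- pointwise conclusion on the good event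
  have hkey : ∀ ω, ω ∉ Bad → ω ∈ S → ∀ T, 1 ≤ T →
      ∑ t ∈ Icc 1 T, (P[fun ω' => ℓ t ω' (p t ω') | ℱ (t - 1)]) ω
        - ∑ t ∈ Icc 1 T, (P[fun ω' => ℓ t ω' (μc t ω') | ℱ (t - 1)]) ω ≤
      ∑ t ∈ Icc 1 T, Y t ω + (2 * (G * D) ^ 2 + 6 * G ^ 2 / lam) * Real.log (1 / δ) := by
    intro ω hBad hS T hT
    set SA := ∑ t ∈ Icc 1 T, A t ω with hSA
    set SY := ∑ t ∈ Icc 1 T, Y t ω with hSY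
    set SQ := ∑ t ∈ Icc 1 T, ‖p t ω - μc t ω‖ ^ 2 with hSQ
    have hSQ0 : 0 ≤ SQ := Finset.sum_nonneg fun t _ => sq_nonneg _
    have hlog : 0 < Real.log (1 / δ) := Real.log_pos ((lt_div_iff₀ hδ0).mpr (by linarith))
    have hMT : M T ω < 1 / δ := by
      by_contra h
      exact hBad ⟨T, le_of_not_gt h⟩
    have hFT : F T ω < Real.log (1 / δ) := by
      have h2 : Real.exp (F T ω) < Real.exp (Real.log (1 / δ)) := by
        rw [Real.exp_log (by positivity)]
        exact hMT
      exact Real.exp_lt_exp.mp h2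
    have hFsplit : F T ω = η * (SA - SY) - η ^ 2 * (G ^ 2 * SQ) := by
      simp only [hFdef, hcdef, hSA, hSY, hSQ]
      rw [Finset.sum_sub_distrib, ← Finset.mul_sum, Finset.sum_sub_distrib, ← Finset.mul_sum,
        ← Finset.mul_sum]
    have hSAle : SA - SY ≤ Real.log (1 / δ) / η + η * (G ^ 2 * SQ) := by
      have k1 : η * (SA - SY) - η ^ 2 * (G ^ 2 * SQ) < Real.log (1 / δ) := by
        rw [← hFsplit]
        exact hFT
      have k2 : η * (SA - SY) ≤ η * (Real.log (1 / δ) / η + η * (G ^ 2 * SQ)) := by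
        have e : η * (Real.log (1 / δ) / η + η * (G ^ 2 * SQ))
            = Real.log (1 / δ) + η ^ 2 * (G ^ 2 * SQ) := by
          field_simp
        rw [e]
        linarith
      exact le_of_mul_le_mul_left k2 hη0
    have hLle : ∑ t ∈ Icc 1 T, (P[fun ω' => ℓ t ω' (p t ω') | ℱ (t - 1)]) ω
        - ∑ t ∈ Icc 1 T, (P[fun ω' => ℓ t ω' (μc t ω') | ℱ (t - 1)]) ω
        ≤ SA - lam * SQ := by
      rw [← Finset.sum_sub_distrib]
      have h := Finset.sum_le_sum (s := Icc 1 T)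
        (f := fun t => (P[fun ω' => ℓ t ω' (p t ω') | ℱ (t - 1)]) ω
          - (P[fun ω' => ℓ t ω' (μc t ω') | ℱ (t - 1)]) ω)
        (g := fun t => A t ω - lam * ‖p t ω - μc t ω‖ ^ 2)
        (fun t htm => hS t (Finset.mem_Icc.mp htm).1)
      refine h.trans ?_
      rw [Finset.sum_sub_distrib, ← Finset.mul_sum]
    have k3 : (η * G ^ 2) * SQ ≤ lam * SQ := mul_le_mul_of_nonneg_right hηG2 hSQ0
    have k4 : η * (G ^ 2 * SQ) = (η * G ^ 2) * SQ := by ring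
    have k5 : Real.log (1 / δ) / η ≤ (2 * (G * D) ^ 2 + 6 * G ^ 2 / lam) * Real.log (1 / δ) := by
      rw [div_eq_mul_one_div]
      calc Real.log (1 / δ) * (1 / η)
          ≤ Real.log (1 / δ) * (2 * (G * D) ^ 2 + 6 * G ^ 2 / lam) :=
            mul_le_mul_of_nonneg_left hC hlog.le
        _ = _ := mul_comm _ _
    linarith
  calc ENNReal.ofReal (1 - 2 * δ) ≤ ENNReal.ofReal (1 - δ) :=
        ENNReal.ofReal_le_ofReal (by linarith)
    _ = 1 - ENNReal.ofReal δ := by rw [ENNReal.ofReal_sub 1 hδ0.le, ENNReal.ofReal_one]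
    _ ≤ 1 - P Bad := tsub_le_tsub_left hville 1
    _ = P Badᶜ := (prob_compl_eq_one_sub hBadmeas).symm
    _ = P (Badᶜ \ Sᶜ) := (measure_diff_null hSnull).symm
    _ ≤ _ := by
        apply measure_mono
        intro ω hω
        exact fun T hT => hkey ω hω.1 (not_not.mp hω.2) T hT
end
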